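/- For the block operator T = [[I, −√(H⁻¹ − I)],[0,0]] on M ⊕ M, where H is self-adjoint with σ(H) ⊆ (0,1], one has ‖T‖ = sqrt(1/min σ(H)) = ‖H⁻¹‖^{1/2}. -/

import Mathlib

open ContinuousLinearMap Complex
open scoped InnerProductSpace

theorem block_skew_projection_norm
    {M : Type*} [NormedAddCommGroup M] [InnerProductSpace ℂ M] [CompleteSpace M]
    (H : M →L[ℂ] M) (hH : IsSelfAdjoint H)
    (hσ : spectrum ℂ H ⊆ (fun r : ℝ => (r : ℂ)) '' Set.Ioc 0 1)
    (Hinv : M →L[ℂ] M) (hHinv : H * Hinv = 1 ∧ Hinv * H = 1)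
    (S : M →L[ℂ] M) (hS : S.IsPositive) (hS2 : S * S = Hinv - 1)
    (T : WithLp 2 (M × M) →L[ℂ] WithLp 2 (M × M))
    (hT : ∀ z : WithLp 2 (M × M),
      T z = (WithLp.equiv 2 (M × M)).symm
        ((WithLp.equiv 2 (M × M) z).1 - S ((WithLp.equiv 2 (M × M) z).2), 0)) :
    ‖T‖ = Real.sqrt (1 / sInf {r : ℝ | (r : ℂ) ∈ spectrum ℂ H}) ∧
      ‖T‖ = Real.sqrt ‖Hinv‖ := by
  obtain ⟨hH1, hH2⟩ := hHinv
  have hSsa : IsSelfAdjoint S := hS.isSelfAdjoint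
  have hre : ∀ c : ℂ, c.re ≤ ‖c‖ := fun c => by
    exact Complex.re_le_norm c
  have hnre : ∀ c : ℂ, -c.re ≤ ‖c‖ := fun c => by
    exact le_trans (neg_le_abs _) (Complex.abs_re_le_norm _)
  have hSS : ∀ w : M, ⟪S (S w), w⟫_ℂ = ⟪S w, S w⟫_ℂ := by
    intro w
    have h := ContinuousLinearMap.adjoint_inner_left S w (S w)
    rwa [hSsa.adjoint_eq] at h
  have hSadj : ∀ a w : M, ⟪S a, w⟫_ℂ = ⟪a, S w⟫_ℂ := by
    intro a w
    have h := ContinuousLinearMap.adjoint_inner_left S w a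
    rw [hSsa.adjoint_eq] at h
    rw [← h]
  have hHw : ∀ w : M, Hinv w = w + S (S w) := by
    intro w
    have h := congrArg (fun A : M →L[ℂ] M => A w) hS2
    simp only [ContinuousLinearMap.mul_apply, ContinuousLinearMap.sub_apply,
      ContinuousLinearMap.one_apply] at h
    rw [h]; abel
  have key : ∀ w : M, ‖w‖ ^ 2 + ‖S w‖ ^ 2 = Complex.re ⟪Hinv w, w⟫_ℂ := by
    intro w
    have e : ∀ v : M, (⟪v, v⟫_ℂ).re = ‖v‖ ^ 2 := fun v => by
      rw [inner_self_eq_norm_sq_to_K (𝕜 := ℂ)]; norm_cast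
    rw [hHw w, inner_add_left, hSS w, Complex.add_re, e w, e (S w)]
  have keyle : ∀ w : M, ‖w‖ ^ 2 + ‖S w‖ ^ 2 ≤ ‖Hinv w‖ * ‖w‖ := by
    intro w
    rw [key w]
    exact le_trans (hre _) (norm_inner_le_norm _ _)
  -- upper bound
  have hTle : ‖T‖ ≤ Real.sqrt ‖Hinv‖ := by
    refine opNorm_le_bound T (Real.sqrt_nonneg _) fun z => ?_
    set x := (WithLp.equiv 2 (M × M) z).1 with hx
    set y := (WithLp.equiv 2 (M × M) z).2 with hy
    set w := x - S y with hwdef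
    have hTz : ‖T z‖ = ‖w‖ := by
      rw [hT z]
      have h := WithLp.prod_norm_eq_of_L2 ((WithLp.equiv 2 (M × M)).symm (w, (0 : M)))
      have h1 : ((WithLp.equiv 2 (M × M)).symm (w, (0 : M))).fst = w := rfl
      have h2 : ((WithLp.equiv 2 (M × M)).symm (w, (0 : M))).snd = (0 : M) := rfl
      rw [h1, h2] at h
      rw [h]
      simp [Real.sqrt_sq (norm_nonneg w)]
    have hz : ‖z‖ ^ 2 = ‖x‖ ^ 2 + ‖y‖ ^ 2 := WithLp.prod_norm_sq_eq_of_L2 z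
    have hb : ‖w‖ ^ 2 ≤ ‖x‖ * ‖w‖ + ‖y‖ * ‖S w‖ := by
      have e1 : (‖w‖ : ℝ) ^ 2 = Complex.re ⟪w, w⟫_ℂ := by
        rw [inner_self_eq_norm_sq_to_K (𝕜 := ℂ)]; norm_cast
      have e2 : ⟪w, w⟫_ℂ = ⟪x, w⟫_ℂ - ⟪y, S w⟫_ℂ := by
        rw [hwdef, inner_sub_left, hSadj y w]
      have e3 : Complex.re ⟪x, w⟫_ℂ ≤ ‖x‖ * ‖w‖ :=
        le_trans (hre _) (norm_inner_le_norm _ _)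
      have e4 : -Complex.re ⟪y, S w⟫_ℂ ≤ ‖y‖ * ‖S w‖ :=
        le_trans (hnre _) (norm_inner_le_norm _ _)
      rw [e1, e2, Complex.sub_re]
      linarith
    have hcs : (‖x‖ * ‖w‖ + ‖y‖ * ‖S w‖) ^ 2 ≤ (‖x‖ ^ 2 + ‖y‖ ^ 2) * (‖w‖ ^ 2 + ‖S w‖ ^ 2) := by
      nlinarith [sq_nonneg (‖x‖ * ‖S w‖ - ‖y‖ * ‖w‖)]
    have hsb : ‖w‖ ^ 2 + ‖S w‖ ^ 2 ≤ ‖Hinv‖ * ‖w‖ ^ 2 := by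
      calc ‖w‖ ^ 2 + ‖S w‖ ^ 2 ≤ ‖Hinv w‖ * ‖w‖ := keyle w
        _ ≤ (‖Hinv‖ * ‖w‖) * ‖w‖ := by
            exact mul_le_mul_of_nonneg_right (le_opNorm Hinv w) (norm_nonneg w)
        _ = ‖Hinv‖ * ‖w‖ ^ 2 := by ring
    have h4 : ‖w‖ ^ 4 ≤ ‖z‖ ^ 2 * (‖Hinv‖ * ‖w‖ ^ 2) := by
      have h0 : (0:ℝ) ≤ ‖w‖ ^ 2 := sq_nonneg _
      nlinarith [sq_nonneg (‖w‖), norm_nonneg w, norm_nonneg x, norm_nonneg y,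
        norm_nonneg (S w), mul_nonneg (norm_nonneg x) (norm_nonneg w),
        mul_nonneg (norm_nonneg y) (norm_nonneg (S w)), sq_nonneg (‖x‖^2 + ‖y‖^2)]
    have h5 : ‖w‖ ^ 2 ≤ ‖Hinv‖ * ‖z‖ ^ 2 := by
      rcases eq_or_lt_of_le (sq_nonneg ‖w‖) with h | h
      · have : (0:ℝ) ≤ ‖Hinv‖ * ‖z‖ ^ 2 := by positivity
        linarith [this, h.symm]
      · nlinarith
    rw [hTz]
    have := Real.sqrt_le_sqrt h5
    rw [Real.sqrt_sq (norm_nonneg w)] at this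
    calc ‖w‖ ≤ Real.sqrt (‖Hinv‖ * ‖z‖ ^ 2) := this
      _ = Real.sqrt ‖Hinv‖ * ‖z‖ := by
          rw [Real.sqrt_mul (norm_nonneg Hinv), Real.sqrt_sq (norm_nonneg z)]
  -- lower bound
  have hge : ‖Hinv‖ ≤ ‖T‖ ^ 2 := by
    refine opNorm_le_bound Hinv (by positivity) fun w => ?_
    set z := (WithLp.equiv 2 (M × M)).symm (w, -S w) with hzdef
    have hz1 : (WithLp.equiv 2 (M × M) z).1 = w := rfl
    have hz2 : (WithLp.equiv 2 (M × M) z).2 = -S w := rfl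
    have hTz : T z = (WithLp.equiv 2 (M × M)).symm (Hinv w, 0) := by
      rw [hT z, hz1, hz2]
      congr 2
      rw [map_neg, sub_neg_eq_add, hHw w]
    have hTzn : ‖T z‖ = ‖Hinv w‖ := by
      rw [hTz]
      have h := WithLp.prod_norm_eq_of_L2 ((WithLp.equiv 2 (M × M)).symm (Hinv w, (0 : M)))
      have h1 : ((WithLp.equiv 2 (M × M)).symm (Hinv w, (0 : M))).fst = Hinv w := rfl
      have h2 : ((WithLp.equiv 2 (M × M)).symm (Hinv w, (0 : M))).snd = (0 : M) := rfl
      rw [h1, h2] at h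
      rw [h]
      simp [Real.sqrt_sq (norm_nonneg (Hinv w))]
    have hzn : ‖z‖ ^ 2 ≤ ‖Hinv w‖ * ‖w‖ := by
      have h := WithLp.prod_norm_sq_eq_of_L2 z
      have h1 : (z.fst : M) = w := rfl
      have h2 : (z.snd : M) = -S w := rfl
      rw [h1, h2, norm_neg] at h
      rw [h]
      exact keyle w
    have hchain : ‖Hinv w‖ ≤ ‖T‖ * ‖z‖ := by
      rw [← hTzn]; exact le_opNorm T z
    have hsq : ‖Hinv w‖ ^ 2 ≤ ‖T‖ ^ 2 * (‖Hinv w‖ * ‖w‖) := by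
      calc ‖Hinv w‖ ^ 2 ≤ (‖T‖ * ‖z‖) ^ 2 := by
            exact pow_le_pow_left₀ (norm_nonneg _) hchain 2
        _ = ‖T‖ ^ 2 * ‖z‖ ^ 2 := by ring
        _ ≤ ‖T‖ ^ 2 * (‖Hinv w‖ * ‖w‖) := by
            exact mul_le_mul_of_nonneg_left hzn (sq_nonneg _)
    rcases eq_or_lt_of_le (norm_nonneg (Hinv w)) with h | h
    · rw [← h]; positivity
    · have := mul_le_mul_of_nonneg_left hsq (le_of_lt (inv_pos.mpr h))
      rw [mul_comm] at this
      nlinarith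
  have hT2 : ‖T‖ = Real.sqrt ‖Hinv‖ := by
    refine le_antisymm hTle ?_
    rw [← Real.sqrt_sq (norm_nonneg T)]
    exact Real.sqrt_le_sqrt hge
  refine ⟨?_, hT2⟩
  rw [hT2]
  congr 1
  -- now: ‖Hinv‖ = 1 / sInf {r | (r:ℂ) ∈ σ H}  (flipped)
  rcases subsingleton_or_nontrivial M with hM | hM
  · have hs : spectrum ℂ H = ∅ := spectrum.of_subsingleton H
    have : Subsingleton (M →L[ℂ] M) := ⟨fun a b => ContinuousLinearMap.ext fun x => Subsingleton.elim _ _⟩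
    have hz : Hinv = 0 := Subsingleton.elim _ _
    rw [hz, hs]
    simp
  · set A := {r : ℝ | (r : ℂ) ∈ spectrum ℂ H} with hA
    have hAsub : A ⊆ Set.Ioc 0 1 := by
      intro r hr
      obtain ⟨s, hs, hsr⟩ := hσ hr
      rwa [Complex.ofReal_inj.mp hsr] at hs
    have hAne : A.Nonempty := by
      obtain ⟨z, hz⟩ := spectrum.nonempty H
      obtain ⟨r, hr, hrz⟩ := hσ hz
      have hrz' : (r : ℂ) = z := hrz
      exact ⟨r, show ((r : ℂ)) ∈ spectrum ℂ H by rw [hrz']; exact hz⟩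
    have hAbdd : BddBelow A := ⟨0, fun r hr => (hAsub hr).1.le⟩
    have hAclosed : IsClosed A :=
      (spectrum.isClosed (𝕜 := ℂ) H).preimage Complex.continuous_ofReal
    have hmem : sInf A ∈ A := hAclosed.csInf_mem hAne hAbdd
    have hm0 : 0 < sInf A := (hAsub hmem).1
    have hHinvsa : IsSelfAdjoint Hinv := by
      have h : Hinv = 1 + S * S := by rw [hS2]; abel
      have hSS2 : IsSelfAdjoint (S * S) := by
        rw [isSelfAdjoint_iff, star_mul, hSsa.star_eq]
      have h1 : IsSelfAdjoint (1 : M →L[ℂ] M) := IsSelfAdjoint.one _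
      rw [h]; exact h1.add hSS2
    set u : (M →L[ℂ] M)ˣ := ⟨H, Hinv, hH1, hH2⟩ with hu
    have hspec : (spectrum ℂ (H : M →L[ℂ] M))⁻¹ = spectrum ℂ Hinv := by
      have h0 : (spectrum ℂ ((u : M →L[ℂ] M)))⁻¹ = spectrum ℂ ((↑u⁻¹ : M →L[ℂ] M)) :=
        spectrum.map_inv u
      exact h0
    -- upper: ‖Hinv‖ ≤ (sInf A)⁻¹
    obtain ⟨k, hk, hknorm⟩ :=
      spectrum.exists_nnnorm_eq_spectralRadius_of_nonempty (𝕜 := ℂ) (spectrum.nonempty Hinv)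
    have hkHinv : ‖k‖ = ‖Hinv‖ := by
      rw [hHinvsa.spectralRadius_eq_nnnorm] at hknorm
      exact_mod_cast congrArg ENNReal.toReal hknorm
    have hkinv : k⁻¹ ∈ spectrum ℂ H := by
      rw [← hspec] at hk
      exact Set.inv_mem_inv.mp (by simpa using hk)
    obtain ⟨r, hrIoc, hrk⟩ := hσ hkinv
    have hrk' : (r : ℂ) = k⁻¹ := hrk
    have hrA : r ∈ A := show ((r : ℂ)) ∈ spectrum ℂ H by rw [hrk']; exact hkinv
    have hrpos : 0 < r := hrIoc.1
    have hkval : ‖k‖ = r⁻¹ := by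
      have hk' : k = ((r : ℂ))⁻¹ := by rw [hrk', inv_inv]
      rw [hk', norm_inv, Complex.norm_real, Real.norm_eq_abs, abs_of_pos hrpos]
    have hub : ‖Hinv‖ ≤ (sInf A)⁻¹ := by
      rw [← hkHinv, hkval]
      exact inv_anti₀ hm0 (csInf_le hAbdd hrA)
    -- lower: (sInf A)⁻¹ ≤ ‖Hinv‖
    have hlb : (sInf A)⁻¹ ≤ ‖Hinv‖ := by
      have hmm : ((sInf A : ℝ) : ℂ)⁻¹ ∈ spectrum ℂ Hinv := by
        rw [← hspec]
        rw [Set.mem_inv, inv_inv]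
        exact hmem
      have := spectrum.norm_le_norm_of_mem hmm
      rwa [norm_inv, Complex.norm_real, Real.norm_eq_abs, abs_of_pos hm0] at this
    rw [le_antisymm hub hlb, one_div]
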